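/- Let X and Y be two real-valued random variables defined on the same probability space. Then for any real numbers a ≤ b, P(a ≤ X ≤ b) ≤ (1/2)·(1 + P(|X − Y| ≤ b − a) + d_TV(L_X, L_Y)), where L_X and L_Y denote the laws of X and Y. -/
import Mathlib


open MeasureTheory

/-- Total variation distance between two measures:
`d_TV(μ, ν) = sup over measurable sets s of |μ(s) − ν(s)|`. -/
noncomputable def tvDist {Ω : Type*} [MeasurableSpace Ω] (μ ν : Measure Ω) : ℝ :=
  ⨆ s : {s : Set Ω // MeasurableSet s}, |(μ s.1).toReal - (ν s.1).toReal|

/-- Let `X` and `Y` be two real random variables on the same probability space. Then for any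
`a ≤ b`, `P(a ≤ X ≤ b) ≤ (1/2) (1 + P(|X − Y| ≤ b − a) + d_TV(L_X, L_Y))`. -/
theorem stmt0 {Ω : Type*} [MeasurableSpace Ω] (P : Measure Ω) [IsProbabilityMeasure P]
    (X Y : Ω → ℝ) (hX : Measurable X) (hY : Measurable Y)
    (a b : ℝ) (hab : a ≤ b) :
    (P {ω | a ≤ X ω ∧ X ω ≤ b}).toReal ≤
      (1 / 2) * (1 + (P {ω | |X ω - Y ω| ≤ b - a}).toReal + tvDist (P.map X) (P.map Y)) := by
  have hA : {ω | a ≤ X ω ∧ X ω ≤ b} = X ⁻¹' Set.Icc a b := rfl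
  set A := X ⁻¹' Set.Icc a b with hAdef
  set B := Y ⁻¹' Set.Icc a b with hBdef
  have hmA : MeasurableSet A := hX measurableSet_Icc
  have hmB : MeasurableSet B := hY measurableSet_Icc
  set C := {ω | |X ω - Y ω| ≤ b - a} with hCdef
  have hsub : A ∩ B ⊆ C := by
    rintro ω ⟨⟨h1, h2⟩, h3, h4⟩
    simp only [C, Set.mem_setOf_eq]
    rw [abs_sub_le_iff]
    constructor <;> linarith
  have key : (P A).toReal + (P B).toReal ≤ 1 + (P C).toReal := by
    have h1 : P A + P B = P (A ∪ B) + P (A ∩ B) := (measure_union_add_inter A hmB).symm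
    have h2 : (P A + P B).toReal = (P A).toReal + (P B).toReal :=
      ENNReal.toReal_add (measure_ne_top _ _) (measure_ne_top _ _)
    have h3 : (P (A ∪ B) + P (A ∩ B)).toReal = (P (A ∪ B)).toReal + (P (A ∩ B)).toReal :=
      ENNReal.toReal_add (measure_ne_top _ _) (measure_ne_top _ _)
    have h4 : (P (A ∪ B)).toReal ≤ 1 := by
      have := prob_le_one (μ := P) (s := A ∪ B)
      simpa using ENNReal.toReal_mono (by simp) this
    have h5 : (P (A ∩ B)).toReal ≤ (P C).toReal :=
      ENNReal.toReal_mono (measure_ne_top _ _) (measure_mono hsub)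
    calc (P A).toReal + (P B).toReal = (P A + P B).toReal := h2.symm
      _ = (P (A ∪ B)).toReal + (P (A ∩ B)).toReal := by rw [h1, h3]
      _ ≤ 1 + (P C).toReal := add_le_add h4 h5
  have tv : (P A).toReal - (P B).toReal ≤ tvDist (P.map X) (P.map Y) := by
    haveI : IsProbabilityMeasure (P.map X) := Measure.isProbabilityMeasure_map hX.aemeasurable
    haveI : IsProbabilityMeasure (P.map Y) := Measure.isProbabilityMeasure_map hY.aemeasurable
    have hb : BddAbove (Set.range fun s : {s : Set ℝ // MeasurableSet s} =>
        |((P.map X) s.1).toReal - ((P.map Y) s.1).toReal|) := by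
      refine ⟨2, ?_⟩
      rintro x ⟨s, rfl⟩
      have h1 : ((P.map X) s.1).toReal ≤ 1 := by
        have := prob_le_one (μ := P.map X) (s := s.1)
        simpa using ENNReal.toReal_mono (by simp) this
      have h2 : ((P.map Y) s.1).toReal ≤ 1 := by
        have := prob_le_one (μ := P.map Y) (s := s.1)
        simpa using ENNReal.toReal_mono (by simp) this
      have h3 : (0:ℝ) ≤ ((P.map X) s.1).toReal := ENNReal.toReal_nonneg
      have h4 : (0:ℝ) ≤ ((P.map Y) s.1).toReal := ENNReal.toReal_nonneg
      rw [abs_le]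
      constructor <;> linarith
    have hle := le_ciSup hb (⟨Set.Icc a b, measurableSet_Icc⟩ : {s : Set ℝ // MeasurableSet s})
    rw [Measure.map_apply hX measurableSet_Icc, Measure.map_apply hY measurableSet_Icc] at hle
    calc (P A).toReal - (P B).toReal ≤ |(P A).toReal - (P B).toReal| := le_abs_self _
      _ ≤ tvDist (P.map X) (P.map Y) := hle
  rw [hA]
  linarith
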